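/- Let n be even and let A ≤ Sym(n) be a transitive abelian permutation group of order n with A ≤ Alt(n). Then at most |A|/4 elements of A are squares, i.e., |{a² : a ∈ A}| ≤ n/4. -/

import Mathlib

open Finset in
private lemma aux_pow_count {G : Type*} [CommGroup G] [Fintype G] [DecidableEq G]
    (hK : (Finset.univ.filter fun x : G => x ^ 2 = 1).card ≤ 2) (j : ℕ) :
    (Finset.univ.filter fun x : G => x ^ (2 ^ j) = 1).card ≤ 2 ^ j := by
  induction j with
  | zero =>
      simp only [pow_zero, pow_one]
      have : (Finset.univ.filter fun x : G => x = 1) = {1} := by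
        ext x; simp
      rw [this]; simp
  | succ j ih =>
      set s := Finset.univ.filter (fun x : G => x ^ (2 ^ (j + 1)) = 1) with hs
      have himg : s.image (fun x => x ^ 2) ⊆
          Finset.univ.filter fun x : G => x ^ (2 ^ j) = 1 := by
        intro y hy
        simp only [Finset.mem_image, hs, Finset.mem_filter, Finset.mem_univ, true_and] at hy ⊢
        obtain ⟨x, hx, rfl⟩ := hy
        rw [← pow_mul, mul_comm 2 (2 ^ j), ← pow_succ]
        exact hx
      have hfib : ∀ b ∈ s.image (fun x => x ^ 2),
          (s.filter fun a => a ^ 2 = b).card ≤ 2 := by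
        intro b hb
        simp only [Finset.mem_image] at hb
        obtain ⟨c, hc, rfl⟩ := hb
        refine le_trans (Finset.card_le_card_of_injOn (fun x => x * c⁻¹) ?_ ?_) hK
        · intro x hx
          simp only [Finset.mem_coe, Finset.mem_filter, Finset.mem_univ, true_and] at hx ⊢
          rw [mul_pow, hx.2, inv_pow, mul_inv_cancel]
        · exact fun a _ b _ h => mul_right_cancel (show a * c⁻¹ = b * c⁻¹ from h)
      calc s.card ≤ 2 * (s.image (fun x => x ^ 2)).card :=
            Finset.card_le_mul_card_image s 2 hfib
        _ ≤ 2 * 2 ^ j := Nat.mul_le_mul_left 2 (le_trans (Finset.card_le_card himg) ih)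
        _ = 2 ^ (j + 1) := (pow_succ' 2 j).symm

private lemma aux_four_le {G : Type*} [CommGroup G] [Finite G] {n : ℕ}
    (hcard : Nat.card G = n) (hn : Even n) (hn0 : n ≠ 0)
    (hexp : ∀ g : G, g ^ (n / 2) = 1) :
    4 ≤ Nat.card {g : G // g ^ 2 = 1} := by
  classical
  letI : Fintype G := Fintype.ofFinite G
  by_contra hlt
  push_neg at hlt
  have hKcard : Nat.card {g : G // g ^ 2 = 1}
      = (Finset.univ.filter fun x : G => x ^ 2 = 1).card := by
    rw [Nat.card_eq_fintype_card, Fintype.card_subtype]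
  -- the 2-torsion subgroup
  set H : Subgroup G :=
    { carrier := {x : G | x ^ 2 = 1}
      one_mem' := one_pow 2
      mul_mem' := fun {a b} ha hb => by
        simp only [Set.mem_setOf_eq] at *
        rw [mul_pow, ha, hb, one_mul]
      inv_mem' := fun {a} ha => by
        simp only [Set.mem_setOf_eq] at *
        rw [inv_pow, ha, inv_one] } with hH
  have hHcard : Nat.card H = Nat.card {g : G // g ^ 2 = 1} :=
    Nat.card_congr (Equiv.subtypeEquivRight fun g => Iff.rfl)
  have hK2 : (Finset.univ.filter fun x : G => x ^ 2 = 1).card ≤ 2 := by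
    by_contra h3
    push_neg at h3
    have h33 : Nat.card {g : G // g ^ 2 = 1} = 3 := by omega
    have hall : ∀ h : H, h = 1 := by
      intro h
      have h3' : h ^ 3 = 1 := by
        have := pow_card_eq_one' (G := H) (x := h)
        rwa [hHcard, h33] at this
      have h2' : h ^ 2 = 1 := by
        ext
        push_cast
        exact h.2
      calc h = h ^ 3 * (h ^ 2)⁻¹ := by group
        _ = 1 := by rw [h3', h2', inv_one, one_mul]
    have : Nat.card H ≤ 1 := by
      rw [Nat.card_eq_fintype_card]
      exact Fintype.card_le_one_iff.mpr fun a b => by rw [hall a, hall b]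
    omega
  have hcount := aux_pow_count hK2
  haveI : Fact (Nat.Prime 2) := ⟨Nat.prime_two⟩
  obtain ⟨P⟩ : Nonempty (Sylow 2 G) := inferInstance
  set k := (Nat.card G).factorization 2 with hk
  have hPcard : Nat.card P = 2 ^ k := P.card_eq_multiplicity
  have hk1 : 1 ≤ k := by
    rw [hk, hcard]
    exact Nat.Prime.factorization_pos_of_dvd Nat.prime_two hn0 hn.two_dvd
  obtain ⟨m, hm⟩ := hn
  have hmn : n = 2 * m := by omega
  have hm0 : m ≠ 0 := by omega
  have hnd : n / 2 = m := by omega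
  have hv : m.factorization 2 = k - 1 := by
    have : (2 * m).factorization 2 = 1 + m.factorization 2 := by
      rw [Nat.factorization_mul (by norm_num) hm0]
      simp [Nat.Prime.factorization Nat.prime_two]
    rw [hk, hcard, hmn, this]
    omega
  have hmem : ∀ g : ↥(P : Subgroup G), (g : G) ^ 2 ^ (k - 1) = 1 := by
    intro g
    obtain ⟨j, hj⟩ := P.isPGroup' g
    have h1 : orderOf (g : G) ∣ 2 ^ j := by
      apply orderOf_dvd_of_pow_eq_one
      exact_mod_cast congrArg (Subtype.val) hj
    obtain ⟨i, hij, hi⟩ := (Nat.dvd_prime_pow Nat.prime_two).mp h1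
    have h2 : (2 : ℕ) ^ i ∣ m := by
      rw [← hi]
      have := orderOf_dvd_of_pow_eq_one (hexp (g : G))
      rwa [hnd] at this
    have hi' : i ≤ k - 1 := by
      rw [← hv]
      exact (Nat.Prime.pow_dvd_iff_le_factorization Nat.prime_two hm0).mp h2
    have : orderOf (g : G) ∣ 2 ^ (k - 1) := hi ▸ pow_dvd_pow 2 hi'
    exact orderOf_dvd_iff_pow_eq_one.mp this
  have hle : Fintype.card ↥(P : Subgroup G) ≤ 2 ^ (k - 1) := by
    rw [← Finset.card_univ]
    refine le_trans (Finset.card_le_card_of_injOn (fun g => (g : G)) ?_ ?_) (hcount (k - 1))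
    · intro g _
      simp only [Finset.mem_coe, Finset.mem_filter, Finset.mem_univ, true_and]
      exact hmem g
    · exact fun a _ b _ h => Subtype.ext h
  have hPfin : Nat.card ↥(P : Subgroup G) = Fintype.card ↥(P : Subgroup G) :=
    Nat.card_eq_fintype_card
  have hpow : (2 : ℕ) ^ (k - 1) < 2 ^ k :=
    Nat.pow_lt_pow_right one_lt_two (by omega)
  omega

theorem stmt_16 {n : ℕ} (hn : Even n) (A : Subgroup (Equiv.Perm (Fin n)))
    (hcomm : ∀ a ∈ A, ∀ b ∈ A, a * b = b * a)
    (htrans : ∀ i j : Fin n, ∃ σ ∈ A, σ i = j)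
    (hcard : Nat.card A = n)
    (hAlt : A ≤ alternatingGroup (Fin n)) :
    4 * {b : Equiv.Perm (Fin n) | ∃ a ∈ A, a ^ 2 = b}.ncard ≤ Nat.card A := by
  classical
  have hn0 : n ≠ 0 := by
    rintro rfl
    have : 0 < Nat.card A := Nat.card_pos
    omega
  -- regularity
  have hreg : ∀ σ ∈ A, ∀ i : Fin n, σ i = i → σ = 1 := by
    intro σ hσ i hi
    refine Equiv.ext fun j => ?_
    rw [Equiv.Perm.one_apply]
    obtain ⟨τ, hτA, hτ⟩ := htrans i j
    have hc := hcomm σ hσ τ hτA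
    calc σ j = σ (τ i) := by rw [hτ]
      _ = (σ * τ) i := rfl
      _ = (τ * σ) i := by rw [hc]
      _ = τ (σ i) := rfl
      _ = τ i := by rw [hi]
      _ = j := hτ
  -- exponent divides n/2
  have hexp : ∀ σ ∈ A, σ ^ (n / 2) = 1 := by
    intro σ hσA
    by_cases h1 : σ = 1
    · simp [h1]
    · have hsupp : σ.support = Finset.univ := by
        apply Finset.eq_univ_iff_forall.mpr
        intro x
        rw [Equiv.Perm.mem_support]
        exact fun hx => h1 (hreg σ hσA x hx)
      have hcyc : ∀ c ∈ σ.cycleType, c = orderOf σ := by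
        intro c hc
        have hc' := hc
        rw [Equiv.Perm.cycleType_def, Multiset.mem_map] at hc'
        obtain ⟨f, hf, rfl⟩ := hc'
        have hfmem : f ∈ σ.cycleFactorsFinset := hf
        obtain ⟨x, hx⟩ := (Equiv.Perm.mem_cycleFactorsFinset_iff.mp hfmem).1.nonempty_support
        have hfx : f = σ.cycleOf x := Equiv.Perm.cycle_is_cycleOf hx hfmem
        have hfix : (σ ^ (Finset.card ∘ Equiv.Perm.support) f) x = x := by
          have h := Equiv.Perm.pow_mod_card_support_cycleOf_self_apply σ f.support.card x
          rw [← hfx, Nat.mod_self, pow_zero] at h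
          exact h.symm
        have hpow1 : σ ^ (Finset.card ∘ Equiv.Perm.support) f = 1 :=
          hreg _ (pow_mem hσA _) x hfix
        exact Nat.dvd_antisymm (Equiv.Perm.dvd_of_mem_cycleType hc)
          (orderOf_dvd_of_pow_eq_one hpow1)
      have hrep : σ.cycleType
          = Multiset.replicate (Multiset.card σ.cycleType) (orderOf σ) :=
        Multiset.eq_replicate_card.mpr hcyc
      have hsum : σ.cycleType.sum = n := by
        rw [Equiv.Perm.sum_cycleType, hsupp, Finset.card_univ, Fintype.card_fin]
      have hn_eq : n = Multiset.card σ.cycleType * orderOf σ := by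
        conv_lhs => rw [← hsum]
        rw [hrep]
        simp [Multiset.sum_replicate, smul_eq_mul]
      have hsign : Equiv.Perm.sign σ = 1 := (Equiv.Perm.mem_alternatingGroup).mp (hAlt hσA)
      rw [Equiv.Perm.sign_of_cycleType] at hsign
      have heven : Even (σ.cycleType.sum + Multiset.card σ.cycleType) :=
        (neg_one_pow_eq_one_iff_even (by decide : (-1 : ℤˣ) ≠ 1)).mp hsign
      rw [hsum] at heven
      have hr_even : Even (Multiset.card σ.cycleType) := (Nat.even_add.mp heven).mp hn
      obtain ⟨r', hr'⟩ := hr_even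
      apply orderOf_dvd_iff_pow_eq_one.mp
      have h2 : n = 2 * (r' * orderOf σ) := by
        conv_lhs => rw [hn_eq]
        rw [hr']
        ring
      have h3 : n / 2 = r' * orderOf σ := by
        conv_lhs => rw [h2]
        rw [Nat.mul_div_cancel_left _ (by norm_num : 0 < 2)]
      rw [h3]
      exact dvd_mul_left (orderOf σ) r'
  -- group structure on A
  letI : CommGroup ↥A :=
    { (inferInstance : Group ↥A) with
      mul_comm := fun a b => Subtype.ext (hcomm a a.2 b b.2) }
  have key : ∀ (k : ℕ) (g : ↥A),
      ((g ^ k : ↥A) : Equiv.Perm (Fin n)) = (g : Equiv.Perm (Fin n)) ^ k := by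
    intro k g
    induction k with
    | zero => rfl
    | succ k ih => rw [pow_succ, pow_succ, ← ih]; rfl
  set f : ↥A →* ↥A :=
    { toFun := fun a => a ^ 2
      map_one' := one_pow 2
      map_mul' := fun a b => mul_pow a b 2 } with hf
  have hS : {b : Equiv.Perm (Fin n) | ∃ a ∈ A, a ^ 2 = b}
      = Subtype.val '' (Set.range f) := by
    ext b
    constructor
    · rintro ⟨a, haA, rfl⟩
      exact ⟨f ⟨a, haA⟩, ⟨⟨a, haA⟩, rfl⟩, key 2 ⟨a, haA⟩⟩
    · rintro ⟨x, ⟨a, rfl⟩, rfl⟩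
      exact ⟨a, a.2, (key 2 a).symm⟩
  have h1 : {b : Equiv.Perm (Fin n) | ∃ a ∈ A, a ^ 2 = b}.ncard
      = Nat.card (Set.range f) := by
    rw [hS, Set.ncard_image_of_injective _ Subtype.val_injective,
      ← Nat.card_coe_set_eq]
  have h2 : Nat.card (Set.range f) = Nat.card f.range :=
    Nat.card_congr (Equiv.subtypeEquivRight fun x => Iff.rfl)
  have h3 : Nat.card ↥A = Nat.card f.range * Nat.card f.ker := by
    rw [Subgroup.card_eq_card_quotient_mul_card_subgroup f.ker]
    congr 1
    exact Nat.card_congr (QuotientGroup.quotientKerEquivRange f).toEquiv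
  have h4 : 4 ≤ Nat.card f.ker := by
    have hexp' : ∀ g : ↥A, g ^ (n / 2) = 1 := by
      intro g
      apply Subtype.ext
      rw [key (n / 2) g]
      exact hexp g g.2
    have h5 := aux_four_le hcard hn hn0 hexp'
    refine le_trans h5 (le_of_eq (Nat.card_congr (Equiv.subtypeEquivRight fun g => ?_)))
    rw [MonoidHom.mem_ker]
    constructor
    · intro h; exact h
    · intro h; exact h
  rw [h1, h2]
  calc 4 * Nat.card f.range ≤ Nat.card f.ker * Nat.card f.range :=
        Nat.mul_le_mul_right _ h4
    _ = Nat.card f.range * Nat.card f.ker := Nat.mul_comm _ _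
    _ = Nat.card ↥A := h3.symm
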